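/- Let q ≥ 1 and let β₁,…,β_q be linearly independent vectors in a Euclidean space V. Let P be an admissible subsystem of roots contained in the set of all sums ∑_{j=1}^q ε_j β_j with ε_j ∈ {±1}. Then any two vectors in P of different norms are orthogonal. -/

import Mathlib

open RealInnerProductSpace

variable {V : Type*} [NormedAddCommGroup V] [InnerProductSpace ℝ V]

/-- A root system in a Euclidean space, without the spanning condition. -/
def IsRootSet (R : Set V) : Prop :=
  R.Finite ∧ (0 : V) ∉ R ∧
  (∀ α ∈ R, ∀ t : ℝ, t • α ∈ R → t = 1 ∨ t = -1) ∧
  (∀ α ∈ R, ∀ β ∈ R, ∃ n : ℤ, 2 * ⟪α, β⟫ / ⟪α, α⟫ = (n : ℝ)) ∧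
  (∀ α ∈ R, ∀ v ∈ R, v - (2 * ⟪α, v⟫ / ⟪α, α⟫) • α ∈ R)

/-- A root system: a finite spanning set, not containing `0`, with `±α` the only
multiples of each root, satisfying integrality and closed under reflections. -/
def IsRootSystem (R : Set V) : Prop :=
  IsRootSet R ∧ Submodule.span ℝ R = ⊤

/-- A subsystem of roots: a set spanning `V` contained in some root system of `V`. -/
def IsSubsystem (P : Set V) : Prop :=
  Submodule.span ℝ P = ⊤ ∧ ∃ R : Set V, IsRootSystem R ∧ P ⊆ R

/-- The reflection closure of `P`: the minimal set containing `P` and closed under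
the reflections `s_α` for `α` in it, i.e. the minimal root system `P̄` containing `P`. -/
inductive ReflClosure (P : Set V) : V → Prop
  | base : ∀ v ∈ P, ReflClosure P v
  | refl : ∀ α v, ReflClosure P α → ReflClosure P v →
      ReflClosure P (v - (2 * ⟪α, v⟫ / ⟪α, α⟫) • α)

/-- `P` is admissible if it is a subsystem of roots and `P̄ \ P` is a root system
(in the subspace it spans). -/
def IsAdmissible (P : Set V) : Prop :=
  IsSubsystem P ∧ IsRootSet ({v | ReflClosure P v} \ P)

private lemma sum_coeff_eq {q : ℕ} {β : Fin q → V} (hβ : LinearIndependent ℝ β)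
    {c d : Fin q → ℝ} (h : ∑ j, c j • β j = ∑ j, d j • β j) (j : Fin q) : c j = d j := by
  have h0 : ∑ i, (c i - d i) • β i = 0 := by
    simp only [sub_smul, Finset.sum_sub_distrib, h, sub_self]
  have h1 := Fintype.linearIndependent_iff.mp hβ (fun i => c i - d i) h0 j
  linarith

private lemma refl_mem {P : Set V} {α v : V} (hα : ReflClosure P α) (hv : ReflClosure P v)
    {t : ℝ} (ht : 2 * ⟪α, v⟫ / ⟪α, α⟫ = t) {w : V} (hw : v - t • α = w) :
    ReflClosure P w := by
  rw [← hw, ← ht]; exact ReflClosure.refl α v hα hv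

private lemma qrefl_mem {Q : Set V}
    (hQrefl : ∀ α ∈ Q, ∀ v ∈ Q, v - (2 * ⟪α, v⟫ / ⟪α, α⟫) • α ∈ Q)
    {α v : V} (hα : α ∈ Q) (hv : v ∈ Q) {t : ℝ} (ht : 2 * ⟪α, v⟫ / ⟪α, α⟫ = t)
    {w : V} (hw : v - t • α = w) : w ∈ Q := by
  rw [← hw, ← ht]; exact hQrefl α hα v hv

set_option maxHeartbeats 2000000 in
private lemma key {q : ℕ} (hq : 1 ≤ q) {β : Fin q → V} (hβ : LinearIndependent ℝ β)
    {P : Set V} (hP : IsAdmissible P)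
    (hPsub : P ⊆ {v | ∃ ε : Fin q → ℝ, (∀ j, ε j = 1 ∨ ε j = -1) ∧ v = ∑ j, ε j • β j})
    {x y : V} (hxP : x ∈ P) (hyP : y ∈ P) (hba : ‖y‖ < ‖x‖) : ⟪x, y⟫ = 0 := by
  by_contra hc
  obtain ⟨⟨hspan, R, ⟨⟨hRfin, hR0, hRmul, hRint, hRrefl⟩, hRspan⟩, hPR⟩, hQ⟩ := hP
  obtain ⟨hQfin, hQ0, hQmul, hQint, hQrefl⟩ := hQ
  obtain ⟨ε, hε, hx⟩ := hPsub hxP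
  obtain ⟨δ, hδ, hy⟩ := hPsub hyP
  have hj0 : 0 < q := hq
  set j₀ : Fin q := ⟨0, hj0⟩ with hj₀
  have hxR : x ∈ R := hPR hxP
  have hyR : y ∈ R := hPR hyP
  have hx0 : x ≠ 0 := fun h => hR0 (h ▸ hxR)
  have hy0 : y ≠ 0 := fun h => hR0 (h ▸ hyR)
  have hapos : 0 < ⟪x, x⟫ := by
    rw [real_inner_self_eq_norm_mul_norm]
    exact mul_pos (norm_pos_iff.mpr hx0) (norm_pos_iff.mpr hx0)
  have hbpos : 0 < ⟪y, y⟫ := by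
    rw [real_inner_self_eq_norm_mul_norm]
    exact mul_pos (norm_pos_iff.mpr hy0) (norm_pos_iff.mpr hy0)
  have hane : ⟪x, x⟫ ≠ 0 := ne_of_gt hapos
  have hbne : ⟪y, y⟫ ≠ 0 := ne_of_gt hbpos
  have hblta : ⟪y, y⟫ < ⟪x, x⟫ := by
    rw [real_inner_self_eq_norm_mul_norm, real_inner_self_eq_norm_mul_norm]
    exact mul_self_lt_mul_self (norm_nonneg y) hba
  obtain ⟨N, hN⟩ := hRint x hxR y hyR
  obtain ⟨M, hM⟩ := hRint y hyR x hxR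
  rw [real_inner_comm x y] at hM
  have h2ca : 2 * ⟪x, y⟫ = (N : ℝ) * ⟪x, x⟫ := (div_eq_iff hane).mp hN
  have h2cb : 2 * ⟪x, y⟫ = (M : ℝ) * ⟪y, y⟫ := (div_eq_iff hbne).mp hM
  have hcs : ⟪x, y⟫ * ⟪x, y⟫ ≤ ⟪x, x⟫ * ⟪y, y⟫ := by
    have h1 := abs_real_inner_le_norm x y
    have h2 : ⟪x, x⟫ = ‖x‖ * ‖x‖ := real_inner_self_eq_norm_mul_norm x
    have h3 : ⟪y, y⟫ = ‖y‖ * ‖y‖ := real_inner_self_eq_norm_mul_norm y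
    nlinarith [abs_nonneg ⟪x, y⟫, abs_mul_abs_self ⟪x, y⟫]
  have h4c : 4 * (⟪x, y⟫ * ⟪x, y⟫) = (N : ℝ) * (M : ℝ) * (⟪x, x⟫ * ⟪y, y⟫) := by
    linear_combination (2 * ⟪x, y⟫) * h2cb + ((M : ℝ) * ⟪y, y⟫) * h2ca
  have hNM4 : N * M ≤ 4 := by
    have h : ((N * M : ℤ) : ℝ) ≤ 4 := by
      push_cast
      nlinarith [mul_pos hapos hbpos]
    exact_mod_cast h
  have hNMpos : 0 < N * M := by
    have h : (0 : ℝ) < ((N * M : ℤ) : ℝ) := by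
      push_cast
      nlinarith [mul_pos hapos hbpos, mul_self_pos.mpr hc]
    exact_mod_cast h
  have hNne : N ≠ 0 := by
    intro h
    rw [h] at h2ca
    norm_num at h2ca
    exact hc h2ca
  have h2c0 : 2 * ⟪x, y⟫ ≠ 0 := by
    intro h; exact hc (by linarith)
  have habs : |N| < |M| := by
    have h1 : |(N : ℝ)| < |(M : ℝ)| := by
      have e1 : |(N : ℝ)| = |2 * ⟪x, y⟫| / ⟪x, x⟫ := by
        rw [← hN, abs_div, abs_of_pos hapos]
      have e2 : |(M : ℝ)| = |2 * ⟪x, y⟫| / ⟪y, y⟫ := by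
        rw [← hM, abs_div, abs_of_pos hbpos]
      rw [e1, e2]
      exact div_lt_div_of_pos_left (abs_pos.mpr h2c0) hbpos hblta
    exact_mod_cast h1
  have habs' : N.natAbs < M.natAbs := by
    rw [Int.abs_eq_natAbs, Int.abs_eq_natAbs] at habs
    exact_mod_cast habs
  have hprod : (N * M).natAbs = N.natAbs * M.natAbs := Int.natAbs_mul N M
  have hNpos : 0 < N.natAbs := Int.natAbs_pos.mpr hNne
  have hNabs1 : N.natAbs = 1 := by
    by_contra h
    have h2 : 2 ≤ N.natAbs := by omega
    have h3 : 3 ≤ M.natAbs := by omega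
    have h4 : 6 ≤ N.natAbs * M.natAbs := Nat.mul_le_mul h2 h3
    have h5 : ((N * M).natAbs : ℤ) = N * M := Int.natAbs_of_nonneg hNMpos.le
    have h6 : (6 : ℕ) ≤ (N * M).natAbs := hprod ▸ h4
    have h7 : (6 : ℤ) ≤ ((N * M).natAbs : ℤ) := by exact_mod_cast h6
    rw [h5] at h7
    omega
  have hN1 : N = 1 ∨ N = -1 := by
    have := Int.natAbs_eq_iff.mp hNabs1
    simpa using this
  have hNM2 : 2 ≤ N * M := by
    have h6 : (N * M).natAbs = M.natAbs := by rw [hprod, hNabs1, one_mul]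
    have h7 : 2 ≤ M.natAbs := by omega
    have h5 : ((N * M).natAbs : ℤ) = N * M := Int.natAbs_of_nonneg hNMpos.le
    have h8 : (2 : ℤ) ≤ ((N * M).natAbs : ℤ) := by rw [h6]; exact_mod_cast h7
    rw [h5] at h8
    exact h8
  obtain ⟨K, hKdef⟩ : ∃ K : ℤ, K = N * M := ⟨_, rfl⟩
  rw [← hKdef] at hNM2 hNM4
  have hK : K = 2 ∨ K = 3 ∨ K = 4 := by omega
  obtain ⟨n, hn⟩ : ∃ n : ℝ, (N : ℝ) = n := ⟨_, rfl⟩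
  rw [hn] at hN h2ca
  have hn1 : n = 1 ∨ n = -1 := by
    rcases hN1 with h | h <;> [left; right] <;> rw [← hn, h] <;> norm_num
  have hn2 : n * n = 1 := by rcases hn1 with rfl | rfl <;> norm_num
  -- coefficient machinery
  have hcomb : ∀ s t : ℝ, s • x + t • y = ∑ j, (s * ε j + t * δ j) • β j := by
    intro s t
    rw [hx, hy, Finset.smul_sum, Finset.smul_sum, ← Finset.sum_add_distrib]
    exact Finset.sum_congr rfl fun j _ => by rw [smul_smul, smul_smul, ← add_smul]
  have hrep2 : ∀ s t : ℝ, s • x + t • y ∈ P →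
      ∀ j, s * ε j + t * δ j = 1 ∨ s * ε j + t * δ j = -1 := by
    intro s t hmem j
    obtain ⟨η', hη'pm, hη'⟩ := hPsub hmem
    have h := sum_coeff_eq hβ ((hcomb s t).symm.trans hη') j
    rw [h]; exact hη'pm j
  -- γ = s_x y = y - n x is in P̄ but not in P
  have hγmem : ReflClosure P (y - n • x) :=
    refl_mem (.base x hxP) (.base y hyP) hN rfl
  have hγnotP : y - n • x ∉ P := by
    intro hmem
    have hmem' : (-n) • x + (1 : ℝ) • y ∈ P := by
      rw [show (-n) • x + (1 : ℝ) • y = y - n • x by module]; exact hmem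
    have h := hrep2 (-n) 1 hmem' j₀
    rcases hn1 with rfl | rfl <;> rcases hε j₀ with h1 | h1 <;> rcases hδ j₀ with h2 | h2 <;>
      rw [h1, h2] at h <;> norm_num at h
  have hγQ : (y - n • x) ∈ ({v | ReflClosure P v} \ P) := ⟨hγmem, hγnotP⟩
  rcases hK with hK | hK | hK
  · -- N*M = 2
    have hNM : N * M = 2 := by rw [← hKdef]; exact hK
    have hMval : M = 2 * N := by rcases hN1 with h | h <;> rw [h] at hNM ⊢ <;> omega
    have hMr : (M : ℝ) = 2 * n := by rw [hMval]; push_cast; rw [hn]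
    have h2cb' : 2 * ⟪x, y⟫ = 2 * n * ⟪y, y⟫ := by rw [h2cb, hMr]
    have hak : ⟪x, x⟫ = 2 * ⟪y, y⟫ := by rcases hn1 with rfl | rfl <;> linarith
    have hδmem : ReflClosure P (x - (2 * n) • y) :=
      refl_mem (.base y hyP) (.base x hxP) (t := 2 * n)
        (by rw [real_inner_comm x y, hM]; exact hMr) rfl
    have eδδ : ⟪x - (2 * n) • y, x - (2 * n) • y⟫ = 2 * ⟪y, y⟫ := by
      simp only [inner_sub_left, inner_sub_right, real_inner_smul_left, real_inner_smul_right,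
        real_inner_comm x y]
      rcases hn1 with rfl | rfl <;> linarith
    have hnegδmem : ReflClosure P ((2 * n) • y - x) :=
      refl_mem hδmem hδmem (t := 2)
        (by rw [eδδ, div_eq_iff (by linarith : 2 * ⟪y, y⟫ ≠ 0)])
        (by module)
    have hnegδnotP : (2 * n) • y - x ∉ P := by
      intro hmem
      have hmem' : (-1 : ℝ) • x + (2 * n) • y ∈ P := by
        rw [show (-1 : ℝ) • x + (2 * n) • y = (2 * n) • y - x by module]; exact hmem
      have hall : ∀ j, δ j = n * ε j := by
        intro j
        have h := hrep2 (-1) (2 * n) hmem' j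
        rcases hn1 with rfl | rfl <;> rcases hε j with h1 | h1 <;> rcases hδ j with h2 | h2 <;>
          rw [h1, h2] at h ⊢ <;> norm_num at h <;> norm_num
      have hyx : y = n • x := by
        rw [hx, hy, Finset.smul_sum]
        exact Finset.sum_congr rfl fun j _ => by rw [smul_smul, ← hall j]
      have hbb : ⟪y, y⟫ = ⟪x, x⟫ := by
        rw [hyx, real_inner_smul_left, real_inner_smul_right, ← mul_assoc, hn2, one_mul]
      linarith
    have hnegδQ : ((2 * n) • y - x) ∈ ({v | ReflClosure P v} \ P) := ⟨hnegδmem, hnegδnotP⟩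
    have eγγ : ⟪y - n • x, y - n • x⟫ = ⟪y, y⟫ := by
      simp only [inner_sub_left, inner_sub_right, real_inner_smul_left, real_inner_smul_right,
        real_inner_comm x y]
      rcases hn1 with rfl | rfl <;> linarith
    have eγδ : ⟪y - n • x, (2 * n) • y - x⟫ = n * ⟪y, y⟫ := by
      simp only [inner_sub_left, inner_sub_right, real_inner_smul_left, real_inner_smul_right,
        real_inner_comm x y]
      rcases hn1 with rfl | rfl <;> linarith
    have hfinal : x ∈ ({v | ReflClosure P v} \ P) := by
      refine qrefl_mem hQrefl hγQ hnegδQ (t := 2 * n) ?_ ?_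
      · rw [eγδ, eγγ, div_eq_iff hbne]; ring
      · match_scalars <;> rcases hn1 with rfl | rfl <;> norm_num
    exact hfinal.2 hxP
  · -- N*M = 3
    have hNM : N * M = 3 := by rw [← hKdef]; exact hK
    have hMval : M = 3 * N := by rcases hN1 with h | h <;> rw [h] at hNM ⊢ <;> omega
    have hMr : (M : ℝ) = 3 * n := by rw [hMval]; push_cast; rw [hn]
    have h2cb' : 2 * ⟪x, y⟫ = 3 * n * ⟪y, y⟫ := by rw [h2cb, hMr]
    have hak : ⟪x, x⟫ = 3 * ⟪y, y⟫ := by rcases hn1 with rfl | rfl <;> linarith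
    have hηmem : ReflClosure P ((2 : ℝ) • y - n • x) :=
      refl_mem (.base y hyP) hγmem (t := -1)
        (by
          have e : 2 * ⟪y, y - n • x⟫ = -⟪y, y⟫ := by
            simp only [inner_sub_right, real_inner_smul_right, real_inner_comm x y]
            rcases hn1 with rfl | rfl <;> linarith
          rw [div_eq_iff hbne]; linarith)
        (by module)
    have hηnotP : (2 : ℝ) • y - n • x ∉ P := by
      intro hmem
      have hmem' : (-n) • x + (2 : ℝ) • y ∈ P := by
        rw [show (-n) • x + (2 : ℝ) • y = (2 : ℝ) • y - n • x by module]; exact hmem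
      have hall : ∀ j, δ j = n * ε j := by
        intro j
        have h := hrep2 (-n) 2 hmem' j
        rcases hn1 with rfl | rfl <;> rcases hε j with h1 | h1 <;> rcases hδ j with h2 | h2 <;>
          rw [h1, h2] at h ⊢ <;> norm_num at h <;> norm_num
      have hyx : y = n • x := by
        rw [hx, hy, Finset.smul_sum]
        exact Finset.sum_congr rfl fun j _ => by rw [smul_smul, ← hall j]
      have hbb : ⟪y, y⟫ = ⟪x, x⟫ := by
        rw [hyx, real_inner_smul_left, real_inner_smul_right, ← mul_assoc, hn2, one_mul]
      linarith
    have hηQ : ((2 : ℝ) • y - n • x) ∈ ({v | ReflClosure P v} \ P) := ⟨hηmem, hηnotP⟩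
    have eγγ : ⟪y - n • x, y - n • x⟫ = ⟪y, y⟫ := by
      simp only [inner_sub_left, inner_sub_right, real_inner_smul_left, real_inner_smul_right,
        real_inner_comm x y]
      rcases hn1 with rfl | rfl <;> linarith
    have eγη : 2 * ⟪y - n • x, (2 : ℝ) • y - n • x⟫ = ⟪y, y⟫ := by
      simp only [inner_sub_left, inner_sub_right, real_inner_smul_left, real_inner_smul_right,
        real_inner_comm x y]
      rcases hn1 with rfl | rfl <;> linarith
    have hfinal : y ∈ ({v | ReflClosure P v} \ P) := by
      refine qrefl_mem hQrefl hγQ hηQ (t := 1) ?_ ?_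
      · rw [eγγ, div_eq_iff hbne]; linarith
      · module
    exact hfinal.2 hyP
  · -- N*M = 4 : impossible, w = 2y - n x would be zero
    have hNM : N * M = 4 := by rw [← hKdef]; exact hK
    have hMval : M = 4 * N := by rcases hN1 with h | h <;> rw [h] at hNM ⊢ <;> omega
    have hMr : (M : ℝ) = 4 * n := by rw [hMval]; push_cast; rw [hn]
    have h2cb' : 2 * ⟪x, y⟫ = 4 * n * ⟪y, y⟫ := by rw [h2cb, hMr]
    have hak : ⟪x, x⟫ = 4 * ⟪y, y⟫ := by rcases hn1 with rfl | rfl <;> linarith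
    have hww : ⟪(2 : ℝ) • y - n • x, (2 : ℝ) • y - n • x⟫ = 0 := by
      simp only [inner_sub_left, inner_sub_right, real_inner_smul_left, real_inner_smul_right,
        real_inner_comm x y]
      rcases hn1 with rfl | rfl <;> linarith
    have hw0 : (2 : ℝ) • y - n • x = 0 := by
      rwa [inner_self_eq_zero] at hww
    have h1 : (-n) • x + (2 : ℝ) • y = 0 := by
      rw [show (-n) • x + (2 : ℝ) • y = (2 : ℝ) • y - n • x by module]; exact hw0
    have h2 : ∑ j, (-n * ε j + 2 * δ j) • β j = ∑ j, (0 : ℝ) • β j := by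
      rw [← hcomb (-n) 2, h1]; simp
    have h3 := sum_coeff_eq hβ h2 j₀
    rcases hn1 with rfl | rfl <;> rcases hε j₀ with h1' | h1' <;> rcases hδ j₀ with h2' | h2' <;>
      rw [h1', h2'] at h3 <;> norm_num at h3

/-- If `β₁,…,β_q` are linearly independent and `P` is an admissible subsystem of roots
contained in `{∑ εⱼβⱼ : εⱼ = ±1}`, then any two vectors of `P` of different norms are
orthogonal. -/
theorem stmt_3 (q : ℕ) (hq : 1 ≤ q) (β : Fin q → V) (hβ : LinearIndependent ℝ β)
    (P : Set V) (hP : IsAdmissible P)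
    (hPsub : P ⊆ {v | ∃ ε : Fin q → ℝ, (∀ j, ε j = 1 ∨ ε j = -1) ∧ v = ∑ j, ε j • β j}) :
    ∀ x ∈ P, ∀ y ∈ P, ‖x‖ ≠ ‖y‖ → ⟪x, y⟫ = 0 := by
  intro x hx y hy hne
  rcases hne.lt_or_gt with h | h
  · rw [real_inner_comm]
    exact key hq hβ hP hPsub hy hx h
  · exact key hq hβ hP hPsub hx hy h
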